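/- Among all unicyclic graphs on n vertices (n ≥ 4), the maximum tenacity is (n+3)/(n−1) if n is odd and (n+2)/n if n is even. -/

import Mathlib

open SimpleGraph

/-- Number of connected components `ω(G)`. -/
noncomputable def SimpleGraph.omegaComp {W : Type*} (G : SimpleGraph W) : ℕ :=
  Nat.card G.ConnectedComponent

/-- Order `τ(G)` of a largest connected component of `G`. -/
noncomputable def SimpleGraph.tauMax {W : Type*} (G : SimpleGraph W) : ℕ :=
  sSup (Set.range fun c : G.ConnectedComponent =>
    Nat.card {v : W // G.connectedComponentMk v = c})

/-- The graph `G - X` obtained by deleting the vertices of `X`. -/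
def SimpleGraph.delVerts {V : Type*} (G : SimpleGraph V) (X : Finset V) :
    SimpleGraph {v : V // v ∉ X} :=
  SimpleGraph.comap Subtype.val G

/-- `X` is a vertex cut of `G`: deleting `X` leaves more than one component. -/
def SimpleGraph.IsVertexCut {V : Type*} (G : SimpleGraph V) (X : Finset V) : Prop :=
  1 < (G.delVerts X).omegaComp

/-- The tenacity `T(G) = min over vertex cuts X of (|X| + τ(G−X)) / ω(G−X)`. -/
noncomputable def SimpleGraph.tenacity {V : Type*} [Fintype V] (G : SimpleGraph V) : ℝ :=
  sInf { t : ℝ | ∃ X : Finset V, G.IsVertexCut X ∧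
    t = ((X.card : ℝ) + (G.delVerts X).tauMax) / (G.delVerts X).omegaComp }

/-- Vertex degree via `Nat.card` (no decidability assumptions needed). -/
noncomputable def SimpleGraph.deg {V : Type*} (G : SimpleGraph V) (v : V) : ℕ :=
  Nat.card (G.neighborSet v)

/-- A unicyclic graph: connected with as many edges as vertices. -/
def SimpleGraph.Unicyclic {V : Type*} [Fintype V] (G : SimpleGraph V) : Prop :=
  G.Connected ∧ Nat.card G.edgeSet = Fintype.card V


set_option linter.unusedSectionVars false
set_option maxHeartbeats 1000000

section Counting

variable {W : Type*} [Finite W] (H : SimpleGraph W)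

lemma cc_surjective : Function.Surjective H.connectedComponentMk :=
  fun c => c.exists_rep

lemma omega_le_card : H.omegaComp ≤ Nat.card W :=
  Nat.card_le_card_of_surjective H.connectedComponentMk (cc_surjective H)

lemma fiber_card_le (c : H.ConnectedComponent) :
    Nat.card {v : W // H.connectedComponentMk v = c} ≤ Nat.card W :=
  Nat.card_le_card_of_injective Subtype.val Subtype.val_injective

lemma fiber_le_tauMax (c : H.ConnectedComponent) :
    Nat.card {v : W // H.connectedComponentMk v = c} ≤ H.tauMax := by
  apply le_csSup
  · exact ⟨Nat.card W, by rintro x ⟨c', rfl⟩; exact fiber_card_le H c'⟩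
  · exact ⟨c, rfl⟩

lemma card_le_tau_mul_omega : Nat.card W ≤ H.tauMax * H.omegaComp := by
  classical
  cases nonempty_fintype W
  have : Finite H.ConnectedComponent := Quot.finite _
  cases nonempty_fintype H.ConnectedComponent
  rw [Nat.card_eq_fintype_card, ← Fintype.card_congr (Equiv.sigmaFiberEquiv H.connectedComponentMk)]
  rw [Fintype.card_sigma]
  calc ∑ c : H.ConnectedComponent, Fintype.card {v : W // H.connectedComponentMk v = c}
      ≤ ∑ _c : H.ConnectedComponent, H.tauMax := by
        apply Finset.sum_le_sum
        intro c _
        rw [← Nat.card_eq_fintype_card]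
        exact fiber_le_tauMax H c
    _ = Fintype.card H.ConnectedComponent * H.tauMax := by
        rw [Finset.sum_const, Finset.card_univ, smul_eq_mul]
    _ = H.tauMax * H.omegaComp := by
        rw [SimpleGraph.omegaComp, Nat.card_eq_fintype_card, mul_comm]

lemma one_le_tauMax [Nonempty W] : 1 ≤ H.tauMax := by
  obtain ⟨w⟩ := ‹Nonempty W›
  have h : 1 ≤ Nat.card {v : W // H.connectedComponentMk v = H.connectedComponentMk w} := by
    have : Finite {v : W // H.connectedComponentMk v = H.connectedComponentMk w} :=
      Subtype.finite
    exact Nat.one_le_iff_ne_zero.mpr (Nat.card_ne_zero.mpr ⟨⟨⟨w, rfl⟩⟩, this⟩)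
  exact le_trans h (fiber_le_tauMax H _)

lemma omega_eq_one_of_connected (h : H.Connected) : H.omegaComp = 1 := by
  have : Nonempty W := h.nonempty
  have : Subsingleton H.ConnectedComponent := by
    constructor
    rintro ⟨a⟩ ⟨b⟩
    exact SimpleGraph.ConnectedComponent.eq.mpr (h.preconnected a b)
  have : Nonempty H.ConnectedComponent := ⟨H.connectedComponentMk (Classical.arbitrary W)⟩
  exact Nat.card_eq_one_iff_unique.mpr ⟨‹_›, ‹_›⟩

lemma edgeless_omega (h : ∀ a b, ¬ H.Adj a b) : H.omegaComp = Nat.card W := by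
  have hinj : Function.Injective H.connectedComponentMk := by
    intro a b hab
    have hr := SimpleGraph.ConnectedComponent.eq.mp hab
    obtain ⟨p⟩ := hr
    cases p with
    | nil => rfl
    | cons had _ => exact absurd had (h _ _)
  exact (Nat.card_eq_of_bijective _ ⟨hinj, cc_surjective H⟩).symm

lemma edgeless_tauMax [Nonempty W] (h : ∀ a b, ¬ H.Adj a b) : H.tauMax = 1 := by
  have hinj : Function.Injective H.connectedComponentMk := by
    intro a b hab
    obtain ⟨p⟩ := SimpleGraph.ConnectedComponent.eq.mp hab
    cases p with
    | nil => rfl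
    | cons had _ => exact absurd had (h _ _)
  have : Nonempty H.ConnectedComponent := ⟨H.connectedComponentMk (Classical.arbitrary W)⟩
  refine le_antisymm ?_ (one_le_tauMax H)
  apply csSup_le (Set.range_nonempty _)
  rintro x ⟨c, rfl⟩
  obtain ⟨w, rfl⟩ := cc_surjective H c
  have he : {v : W // H.connectedComponentMk v = H.connectedComponentMk w} ≃ PUnit.{1} := by
    refine Equiv.ofBijective (fun _ => PUnit.unit) ⟨?_, fun _ => ⟨⟨w, rfl⟩, rfl⟩⟩
    rintro ⟨a, ha⟩ ⟨b, hb⟩ _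
    exact Subtype.ext (hinj (ha.trans hb.symm))
  show Nat.card {v : W // H.connectedComponentMk v = H.connectedComponentMk w} ≤ 1
  rw [Nat.card_congr he, Nat.card_eq_fintype_card]
  simp

end Counting

section DelVerts

variable {V : Type*} [Fintype V] (G : SimpleGraph V)

lemma card_delVerts [DecidableEq V] (X : Finset V) :
    Nat.card {v : V // v ∉ X} = Fintype.card V - X.card := by
  rw [Nat.card_eq_fintype_card]
  have := Fintype.card_subtype_compl (fun v => v ∈ X)
  simpa using this

lemma reachable_delVerts_of_walk {X : Finset V} {u v : V} (p : G.Walk u v)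
    (hp : ∀ x ∈ p.support, x ∉ X) :
    (G.delVerts X).Reachable ⟨u, hp u p.start_mem_support⟩ ⟨v, hp v p.end_mem_support⟩ := by
  induction p with
  | nil => rfl
  | @cons a b c h q ih =>
      have hq : ∀ x ∈ q.support, x ∉ X := fun x hx => hp x (by simp [hx])
      have hadj : (G.delVerts X).Adj ⟨a, hp a (SimpleGraph.Walk.start_mem_support _)⟩
          ⟨b, hq b q.start_mem_support⟩ := h
      exact hadj.reachable.trans (ih hq)

lemma omega_delVerts_empty (hG : G.Connected) :
    (G.delVerts (∅ : Finset V)).omegaComp = 1 := by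
  apply omega_eq_one_of_connected
  have hne : Nonempty {v : V // v ∉ (∅ : Finset V)} := ⟨⟨hG.nonempty.some, by simp⟩⟩
  constructor
  rintro ⟨a, ha⟩ ⟨b, hb⟩
  obtain ⟨p⟩ := hG.preconnected a b
  exact reachable_delVerts_of_walk G p (by simp)

lemma tenacity_set_bddBelow :
    BddBelow { t : ℝ | ∃ X : Finset V, G.IsVertexCut X ∧
      t = ((X.card : ℝ) + (G.delVerts X).tauMax) / (G.delVerts X).omegaComp } := by
  refine ⟨0, ?_⟩
  rintro t ⟨X, _, rfl⟩
  positivity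

lemma tenacity_le {X : Finset V} (hX : G.IsVertexCut X) :
    G.tenacity ≤ ((X.card : ℝ) + (G.delVerts X).tauMax) / (G.delVerts X).omegaComp :=
  csInf_le (tenacity_set_bddBelow G) ⟨X, hX, rfl⟩

lemma indep_cut [DecidableEq V] (I : Finset V)
    (hI : ∀ x ∈ I, ∀ y ∈ I, ¬ G.Adj x y) (h2 : 2 ≤ I.card) :
    G.IsVertexCut Iᶜ ∧
      ((Iᶜ.card : ℝ) + (G.delVerts Iᶜ).tauMax) / (G.delVerts Iᶜ).omegaComp
        = ((Fintype.card V : ℝ) - I.card + 1) / I.card := by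
  have hedgeless : ∀ a b, ¬ (G.delVerts Iᶜ).Adj a b := by
    rintro ⟨a, ha⟩ ⟨b, hb⟩ hab
    rw [Finset.notMem_compl] at ha hb
    exact hI a ha b hb hab
  have hcard : Nat.card {v : V // v ∉ Iᶜ} = I.card := by
    rw [Nat.card_eq_fintype_card]
    rw [Fintype.card_congr (Equiv.subtypeEquivRight (fun v => by
      rw [Finset.notMem_compl]))]
    exact Fintype.card_coe I
  have hne : Nonempty {v : V // v ∉ Iᶜ} := by
    apply Nat.card_pos_iff.mp ?_ |>.1
    rw [hcard]; omega
  have hω : (G.delVerts Iᶜ).omegaComp = I.card :=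
    (edgeless_omega _ hedgeless).trans hcard
  have hτ : (G.delVerts Iᶜ).tauMax = 1 := edgeless_tauMax _ hedgeless
  have hIle : I.card ≤ Fintype.card V := by
    simpa using Finset.card_le_univ I
  constructor
  · show 1 < (G.delVerts Iᶜ).omegaComp
    rw [hω]; omega
  · rw [hω, hτ, Finset.card_compl, Nat.cast_sub hIle]
    norm_num

end DelVerts

section SpanningTree

variable {V : Type*} [Fintype V]

lemma connected_sdiff_of_reachable {G : SimpleGraph V} (hG : G.Connected) {u v : V}
    (hr : (G \ fromEdgeSet {s(u, v)}).Reachable u v) :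
    (G \ fromEdgeSet {s(u, v)}).Connected := by
  have key : ∀ {a b : V}, G.Walk a b → (G \ fromEdgeSet {s(u, v)}).Reachable a b := by
    intro a b p
    induction p with
    | nil => exact Reachable.refl _
    | @cons a c b hac q ih =>
        refine Reachable.trans ?_ ih
        by_cases he : s(a, c) = s(u, v)
        · rw [Sym2.eq_iff] at he
          rcases he with ⟨rfl, rfl⟩ | ⟨rfl, rfl⟩
          · exact hr
          · exact hr.symm
        · refine SimpleGraph.Adj.reachable ?_
          rw [SimpleGraph.sdiff_adj]
          exact ⟨hac, by simp [SimpleGraph.fromEdgeSet_adj, he]⟩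
  have hne : Nonempty V := hG.nonempty
  constructor
  intro a b
  obtain ⟨p⟩ := hG.preconnected a b
  exact key p

lemma exists_spanning_tree :
    ∀ (m : ℕ) (G : SimpleGraph V), G.Connected → Nat.card G.edgeSet ≤ m →
      ∃ T : SimpleGraph V, T ≤ G ∧ T.IsTree := by
  intro m
  induction m with
  | zero =>
      intro G hG hm
      refine ⟨G, le_refl G, hG, ?_⟩
      intro v c hc
      have h3 := hc.three_le_length
      have hne : c.edges ≠ [] := by
        intro h
        have := c.length_edges
        rw [h] at this
        simp at this
        omega
      obtain ⟨e, he⟩ := List.exists_mem_of_ne_nil _ hne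
      have heg : e ∈ G.edgeSet := c.edges_subset_edgeSet he
      have : Nat.card G.edgeSet = 0 := Nat.le_zero.mp hm
      rw [Nat.card_coe_set_eq, Set.ncard_eq_zero (Set.toFinite _)] at this
      rw [this] at heg
      exact heg
  | succ m ih =>
      intro G hG hm
      by_cases hac : G.IsAcyclic
      · exact ⟨G, le_refl G, hG, hac⟩
      · simp only [SimpleGraph.IsAcyclic] at hac
        push_neg at hac
        obtain ⟨v, c, hc⟩ := hac
        have h3 := hc.three_le_length
        have hne : c.edges ≠ [] := by
          intro h
          have := c.length_edges
          rw [h] at this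
          simp at this
          omega
        obtain ⟨e, he⟩ := List.exists_mem_of_ne_nil _ hne
        induction e using Sym2.ind with
        | _ u w =>
          have hadj : G.Adj u w := c.adj_of_mem_edges he
          have hreach : (G \ fromEdgeSet {s(u, w)}).Reachable u w :=
            (SimpleGraph.adj_and_reachable_delete_edges_iff_exists_cycle.mpr ⟨v, c, hc, he⟩).2
          have hconn' := connected_sdiff_of_reachable hG hreach
          have hcard : Nat.card (G \ fromEdgeSet {s(u, w)}).edgeSet ≤ m := by
            have heq : (G \ fromEdgeSet {s(u, w)}).edgeSet = G.edgeSet \ {s(u, w)} := by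
              rw [SimpleGraph.edgeSet_sdiff, SimpleGraph.edgeSet_fromEdgeSet,
                SimpleGraph.edgeSet_sdiff_sdiff_isDiag]
            rw [heq, Nat.card_coe_set_eq,
              Set.ncard_diff_singleton_of_mem (c.edges_subset_edgeSet he)]
            rw [Nat.card_coe_set_eq] at hm
            omega
          obtain ⟨T, hT, hTt⟩ := ih _ hconn' hcard
          exact ⟨T, hT.trans sdiff_le, hTt⟩

lemma tree_coloring {T : SimpleGraph V} (hT : T.IsTree) :
    ∃ C : V → Bool, ∀ {x y}, T.Adj x y → C x ≠ C y := by
  classical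
  obtain ⟨r⟩ := hT.isConnected.nonempty
  have hup := hT.existsUnique_path
  let p : ∀ v, T.Walk r v := fun v => (hup r v).choose
  have hp : ∀ v, (p v).IsPath := fun v => (hup r v).choose_spec.1
  have huniq : ∀ (v) (q : T.Walk r v), q.IsPath → q = p v :=
    fun v q hq => (hup r v).choose_spec.2 q hq
  refine ⟨fun v => decide ((p v).length % 2 = 0), ?_⟩
  intro x y hadj
  have key : (p y).length = (p x).length + 1 ∨ (p x).length = (p y).length + 1 := by
    by_cases hy : y ∈ (p x).support
    · right
      have hd := (hp x).dropUntil hy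
      have ht := (hp x).takeUntil hy
      have h1 : ((p x).dropUntil y hy) = (SimpleGraph.Path.singleton hadj.symm :
          T.Path y x).val :=
        congrArg Subtype.val
          (hT.IsAcyclic.path_unique ⟨(p x).dropUntil y hy, hd⟩ (SimpleGraph.Path.singleton hadj.symm))
      have h2 : (p x).takeUntil y hy = p y := huniq y _ ht
      have h3 := congrArg SimpleGraph.Walk.length (SimpleGraph.Walk.take_spec (p x) hy)
      rw [SimpleGraph.Walk.length_append, h1, h2] at h3
      simp only [SimpleGraph.Path.singleton, SimpleGraph.Walk.length_cons,
        SimpleGraph.Walk.length_nil] at h3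
      omega
    · left
      have hq : (SimpleGraph.Walk.cons hadj.symm (p x).reverse).reverse.IsPath := by
        rw [SimpleGraph.Walk.isPath_reverse_iff]
        rw [SimpleGraph.Walk.cons_isPath_iff]
        exact ⟨(hp x).reverse, by simpa using hy⟩
      have h2 := huniq y _ hq
      have hl := congrArg SimpleGraph.Walk.length h2
      simp only [SimpleGraph.Walk.length_reverse, SimpleGraph.Walk.length_cons] at hl
      omega
  simp only [ne_eq, decide_eq_decide]
  rcases key with h | h <;> rw [h] <;> omega

end SpanningTree

section IndepHalf

variable {V : Type*} [Fintype V] [DecidableEq V]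

lemma exists_indep_half {G : SimpleGraph V} (hG : G.Unicyclic)
    (hn4 : 4 ≤ Fintype.card V) :
    ∃ I : Finset V, I.card = Fintype.card V / 2 ∧ ∀ x ∈ I, ∀ y ∈ I, ¬ G.Adj x y := by
  classical
  obtain ⟨hconn, hcard⟩ := hG
  obtain ⟨T, hTle, hT⟩ := exists_spanning_tree _ G hconn le_rfl
  haveI : Fintype G.edgeSet := Fintype.ofFinite _
  haveI : Fintype T.edgeSet := Fintype.ofFinite _
  have hTsub : T.edgeFinset ⊆ G.edgeFinset := SimpleGraph.edgeFinset_mono hTle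
  have hTcard : T.edgeFinset.card + 1 = Fintype.card V := hT.card_edgeFinset
  have hGcard : G.edgeFinset.card = Fintype.card V := by
    rw [← hcard, SimpleGraph.edgeFinset, Set.toFinset_card, Nat.card_eq_fintype_card]
  have hdiff : (G.edgeFinset \ T.edgeFinset).card = 1 := by
    rw [Finset.card_sdiff_of_subset hTsub]; omega
  obtain ⟨estar, hestar⟩ := Finset.card_eq_one.mp hdiff
  induction estar using Sym2.ind with
  | _ u0 v0 =>
  have hdichot : ∀ {x y}, G.Adj x y → T.Adj x y ∨ s(x, y) = s(u0, v0) := by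
    intro x y hxy
    by_cases hxyT : T.Adj x y
    · exact Or.inl hxyT
    · right
      have hmem : s(x, y) ∈ G.edgeFinset \ T.edgeFinset := by
        rw [Finset.mem_sdiff]
        exact ⟨SimpleGraph.mem_edgeFinset.mpr hxy, by
          simp [SimpleGraph.mem_edgeFinset, hxyT]⟩
      rw [hestar, Finset.mem_singleton] at hmem
      exact hmem
  obtain ⟨C, hC⟩ := tree_coloring hT
  set n := Fintype.card V with hn
  set k := n / 2 with hk
  have finish : ∀ S : Finset V, (∀ x ∈ S, ∀ y ∈ S, ¬ G.Adj x y) → k ≤ S.card →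
      ∃ I : Finset V, I.card = k ∧ ∀ x ∈ I, ∀ y ∈ I, ¬ G.Adj x y := by
    intro S hS hkS
    obtain ⟨I, hIS, hIcard⟩ := Finset.exists_subset_card_eq hkS
    exact ⟨I, hIcard, fun x hx y hy => hS x (hIS hx) y (hIS hy)⟩
  by_cases hsame : C u0 = C v0
  · set S : Finset V := Finset.univ.filter (fun v => C v = C u0) with hS
    have hmemS : ∀ {v}, v ∈ S ↔ C v = C u0 := by
      intro v; rw [hS, Finset.mem_filter]; simp
    have hScompl : ∀ {v}, v ∈ Sᶜ ↔ C v ≠ C u0 := by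
      intro v; rw [Finset.mem_compl, hmemS]
    have hTindS : ∀ x ∈ S, ∀ y ∈ S, ¬ T.Adj x y := by
      intro x hx y hy hxy
      exact hC hxy ((hmemS.mp hx).trans (hmemS.mp hy).symm)
    by_cases hbig : k + 1 ≤ S.card
    · refine finish (S.erase u0) ?_ ?_
      · intro x hx y hy hxy
        rcases hdichot hxy with hTxy | hsym
        · exact hTindS x (Finset.mem_of_mem_erase hx) y (Finset.mem_of_mem_erase hy) hTxy
        · rw [Sym2.eq_iff] at hsym
          rcases hsym with ⟨rfl, rfl⟩ | ⟨rfl, rfl⟩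
          · exact (Finset.ne_of_mem_erase hx) rfl
          · exact (Finset.ne_of_mem_erase hy) rfl
      · have := Finset.card_erase_of_mem (hmemS.mpr rfl)
        omega
    · refine finish Sᶜ ?_ ?_
      · intro x hx y hy hxy
        rcases hdichot hxy with hTxy | hsym
        · apply hC hTxy
          have hx' := hScompl.mp hx
          have hy' := hScompl.mp hy
          cases hcx : C x <;> cases hcy : C y <;> cases hcu : C u0 <;>
            simp_all
        · rw [Sym2.eq_iff] at hsym
          rcases hsym with ⟨rfl, rfl⟩ | ⟨rfl, rfl⟩
          · exact hScompl.mp hx (hmemS.mp (hmemS.mpr rfl))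
          · exact hScompl.mp hy (hmemS.mp (hmemS.mpr rfl))
      · have := Finset.card_compl S
        have hSle : S.card ≤ k := by omega
        omega
  · -- classes of C are independent in G
    have hclass : ∀ b : Bool, ∀ x ∈ Finset.univ.filter (fun v => C v = b),
        ∀ y ∈ Finset.univ.filter (fun v => C v = b), ¬ G.Adj x y := by
      intro b x hx y hy hxy
      rw [Finset.mem_filter] at hx hy
      rcases hdichot hxy with hTxy | hsym
      · exact hC hTxy (hx.2.trans hy.2.symm)
      · rw [Sym2.eq_iff] at hsym
        rcases hsym with ⟨rfl, rfl⟩ | ⟨rfl, rfl⟩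
        · exact hsame (hx.2.trans hy.2.symm)
        · exact hsame (hy.2.trans hx.2.symm)
    have hsum : (Finset.univ.filter (fun v => C v = true)).card
        + (Finset.univ.filter (fun v => C v = false)).card = n := by
      have h1 := Finset.card_filter_add_card_filter_not
        (s := (Finset.univ : Finset V)) (p := fun v => C v = true)
      have h2 : Finset.univ.filter (fun v => ¬ C v = true)
          = Finset.univ.filter (fun v => C v = false) := by
        apply Finset.filter_congr
        intro v _
        cases C v <;> simp
      rw [h2] at h1
      simpa using h1
    rcases le_or_gt k (Finset.univ.filter (fun v => C v = true)).card with hb | hb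
    · exact finish _ (hclass true) hb
    · refine finish _ (hclass false) ?_
      omega

end IndepHalf

section CycleBasics
open Fin.CommRing

lemma fin_val_one {n : ℕ} [NeZero n] (hn : 4 ≤ n) : ((1 : Fin n)).val = 1 := by
  rw [← Nat.cast_one (R := Fin n), Fin.val_cast_of_lt (by omega)]

lemma fin_sub_val_one {n : ℕ} [NeZero n] (hn : 4 ≤ n) {u v : Fin n} (h : (u - v).val = 1) :
    u = v + 1 := by
  have h1 : u - v = 1 := Fin.val_injective (by rw [h, fin_val_one hn])
  have h2 : u = 1 + v := eq_add_of_sub_eq h1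
  rw [h2, add_comm]

lemma cycle_adj_succ {n : ℕ} [NeZero n] (hn : 4 ≤ n) (x : Fin n) : (cycleGraph n).Adj x (x + 1) := by
  rw [SimpleGraph.cycleGraph_adj']
  right
  rw [add_sub_cancel_left]
  exact fin_val_one hn

lemma cycle_connected {n : ℕ} [NeZero n] (hn : 4 ≤ n) : (cycleGraph n).Connected := by
  have h0 : ∀ k : ℕ, (cycleGraph n).Reachable 0 (k : Fin n) := by
    intro k
    induction k with
    | zero => rw [Nat.cast_zero]
    | succ k ih =>
        have hc : ((k + 1 : ℕ) : Fin n) = (k : Fin n) + 1 := by push_cast; ring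
        rw [hc]
        exact ih.trans (cycle_adj_succ hn _).reachable
  haveI : Nonempty (Fin n) := ⟨0⟩
  constructor
  intro a b
  have ha := h0 a.val
  have hb := h0 b.val
  rw [Fin.cast_val_eq_self] at ha hb
  exact ha.symm.trans hb

lemma cycle_edgeSet {n : ℕ} [NeZero n] (hn : 4 ≤ n) :
    (cycleGraph n).edgeSet = Set.range (fun i : Fin n => s(i, i + 1)) := by
  ext e
  induction e using Sym2.ind with
  | _ u v =>
    rw [SimpleGraph.mem_edgeSet, SimpleGraph.cycleGraph_adj']
    constructor
    · rintro (h | h)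
      · obtain rfl := fin_sub_val_one hn h
        exact ⟨v, Sym2.eq_swap⟩
      · obtain rfl := fin_sub_val_one hn h
        exact ⟨u, rfl⟩
    · rintro ⟨i, hi⟩
      rw [Sym2.eq_iff] at hi
      rcases hi with ⟨rfl, rfl⟩ | ⟨rfl, rfl⟩
      · right
        rw [add_sub_cancel_left]
        exact fin_val_one hn
      · left
        rw [add_sub_cancel_left]
        exact fin_val_one hn

lemma cycle_unicyclic {n : ℕ} [NeZero n] (hn : 4 ≤ n) : (cycleGraph n).Unicyclic := by
  refine ⟨cycle_connected hn, ?_⟩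
  rw [cycle_edgeSet hn, Fintype.card_fin]
  rw [Nat.card_range_of_injective ?_, Nat.card_eq_fintype_card, Fintype.card_fin]
  intro i j hij
  rw [Sym2.eq_iff] at hij
  rcases hij with ⟨h1, _⟩ | ⟨h1, h2⟩
  · exact h1
  · exfalso
    subst h1
    have h3 : j + (2 : Fin n) = j + 0 := by
      rw [add_zero]
      calc j + 2 = j + 1 + 1 := by ring
      _ = j := h2
    have h4 := add_left_cancel h3
    have h5 : ((2 : ℕ) : Fin n) = (2 : Fin n) := by norm_cast
    rw [← h5] at h4
    have := congrArg Fin.val h4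
    rw [Fin.val_cast_of_lt (by omega), Fin.val_zero] at this
    omega

lemma card_filter_odd_range (n : ℕ) :
    ((Finset.range n).filter (fun x => x % 2 = 1)).card = n / 2 := by
  induction n with
  | zero => simp
  | succ n ih =>
      rw [Finset.range_add_one, Finset.filter_insert]
      by_cases h : n % 2 = 1
      · rw [if_pos h, Finset.card_insert_of_notMem (by simp)]
        omega
      · rw [if_neg h]
        omega

lemma cycle_indep {n : ℕ} [NeZero n] (hn : 4 ≤ n) :
    ∃ I : Finset (Fin n), I.card = n / 2 ∧
      ∀ x ∈ I, ∀ y ∈ I, ¬ (cycleGraph n).Adj x y := by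
  have key : ∀ {x y : Fin n}, x.val % 2 = 1 → y.val % 2 = 1 → (x - y).val = 1 → False := by
    intro x y hx hy h
    obtain rfl := fin_sub_val_one hn h
    have hv : (y + 1).val = (y.val + 1) % n := by
      rw [Fin.add_def, fin_val_one hn]
    rcases lt_or_ge (y.val + 1) n with hlt | hge
    · rw [Nat.mod_eq_of_lt hlt] at hv
      omega
    · have hyn : y.val + 1 = n := by omega
      rw [hyn, Nat.mod_self] at hv
      omega
  refine ⟨Finset.univ.filter (fun v : Fin n => v.val % 2 = 1), ?_, ?_⟩
  · rw [← card_filter_odd_range n]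
    apply Finset.card_bij (fun (v : Fin n) _ => v.val)
    · intro v hv
      rw [Finset.mem_filter] at hv ⊢
      exact ⟨Finset.mem_range.mpr v.isLt, hv.2⟩
    · intro a _ b _ hab
      exact Fin.val_injective hab
    · intro x hx
      rw [Finset.mem_filter, Finset.mem_range] at hx
      exact ⟨⟨x, hx.1⟩, Finset.mem_filter.mpr ⟨Finset.mem_univ _, hx.2⟩, rfl⟩
  · intro x hx y hy hadj
    rw [Finset.mem_filter] at hx hy
    rw [SimpleGraph.cycleGraph_adj'] at hadj
    rcases hadj with h | h
    · exact key hx.2 hy.2 h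
    · exact key hy.2 hx.2 h

end CycleBasics

section CycleOmega
open Fin.CommRing

lemma cycle_omega_le_card {n : ℕ} [NeZero n] (hn : 4 ≤ n) (X : Finset (Fin n))
    (hX : X.Nonempty) : ((cycleGraph n).delVerts X).omegaComp ≤ X.card := by
  classical
  have hex : ∀ v : {v : Fin n // v ∉ X}, ∃ k : ℕ, 0 < k ∧ (v.val + (k : Fin n)) ∈ X := by
    rintro ⟨v, hv⟩
    obtain ⟨x, hx⟩ := hX
    refine ⟨(x - v).val, ?_, ?_⟩
    · rcases Nat.eq_zero_or_pos (x - v).val with h0 | h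
      · exfalso
        have : x - v = 0 := Fin.val_injective (by simpa using h0)
        have : x = v := by
          have := eq_add_of_sub_eq this
          simpa using this
        exact hv (this ▸ hx)
      · exact h
    · show v + ((((x - v).val : ℕ) : Fin n)) ∈ X
      rw [Fin.cast_val_eq_self]
      have : v + (x - v) = x := by ring
      rw [this]
      exact hx
  set W := {v : Fin n // v ∉ X}
  let d : W → ℕ := fun v => Nat.find (hex v)
  have hd_pos : ∀ v, 0 < d v := fun v => (Nat.find_spec (hex v)).1
  have hd_mem : ∀ v, (v.val + ((d v : ℕ) : Fin n)) ∈ X := fun v => (Nat.find_spec (hex v)).2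
  have hnotin : ∀ (v : W) (j : ℕ), j < d v → (v.val + (j : Fin n)) ∉ X := by
    intro v j hlt
    rcases Nat.eq_zero_or_pos j with rfl | hj
    · simpa using v.prop
    · intro hmem
      exact Nat.find_min (hex v) hlt ⟨hj, hmem⟩
  have hreach : ∀ (v : W) (j : ℕ) (hj : j < d v),
      ((cycleGraph n).delVerts X).Reachable v ⟨v.val + (j : Fin n), hnotin v j hj⟩ := by
    intro v j
    induction j with
    | zero =>
        intro hj
        have he : (⟨v.val + ((0 : ℕ) : Fin n), hnotin v 0 hj⟩ : W) = v :=
          Subtype.ext (by simp)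
        rw [he]
    | succ j ih =>
        intro hj
        have hj' : j < d v := Nat.lt_of_succ_lt hj
        refine (ih hj').trans (SimpleGraph.Adj.reachable ?_)
        show (cycleGraph n).Adj (v.val + (j : Fin n)) (v.val + ((j + 1 : ℕ) : Fin n))
        have hc : ((j + 1 : ℕ) : Fin n) = (j : Fin n) + 1 := by push_cast; ring
        rw [hc, ← add_assoc]
        exact cycle_adj_succ hn _
  have key : ∀ v w : W, v.val + ((d v : ℕ) : Fin n) = w.val + ((d w : ℕ) : Fin n) →
      ((cycleGraph n).delVerts X).Reachable v w := by
    intro v w hvw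
    obtain ⟨jv, hjv⟩ : ∃ jv, d v = jv + 1 := ⟨d v - 1, by have := hd_pos v; omega⟩
    obtain ⟨jw, hjw⟩ : ∃ jw, d w = jw + 1 := ⟨d w - 1, by have := hd_pos w; omega⟩
    have heq : v.val + ((jv : ℕ) : Fin n) = w.val + ((jw : ℕ) : Fin n) := by
      have h1 : ((jv + 1 : ℕ) : Fin n) = (jv : Fin n) + 1 := by push_cast; ring
      have h2 : ((jw + 1 : ℕ) : Fin n) = (jw : Fin n) + 1 := by push_cast; ring
      rw [hjv, hjw, h1, h2] at hvw
      linear_combination hvw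
    have h1 := hreach v jv (by omega)
    have h2 := hreach w jw (by omega)
    have he : (⟨v.val + ((jv : ℕ) : Fin n), hnotin v jv (by omega)⟩ : W)
        = ⟨w.val + ((jw : ℕ) : Fin n), hnotin w jw (by omega)⟩ := Subtype.ext heq
    rw [he] at h1
    exact h1.trans h2.symm
  let rep : ((cycleGraph n).delVerts X).ConnectedComponent → W :=
    fun c => c.exists_rep.choose
  have hrep : ∀ c, ((cycleGraph n).delVerts X).connectedComponentMk (rep c) = c :=
    fun c => c.exists_rep.choose_spec
  have hinj : Function.Injective
      (fun c : ((cycleGraph n).delVerts X).ConnectedComponent =>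
        (⟨(rep c).val + ((d (rep c) : ℕ) : Fin n), hd_mem _⟩ : {x // x ∈ X})) := by
    intro c₁ c₂ hc
    have hvals := congrArg Subtype.val hc
    have hr := key _ _ hvals
    rw [← hrep c₁, ← hrep c₂]
    exact SimpleGraph.ConnectedComponent.eq.mpr hr
  calc ((cycleGraph n).delVerts X).omegaComp
      ≤ Nat.card {x // x ∈ X} := Nat.card_le_card_of_injective _ hinj
    _ = X.card := by rw [Nat.card_eq_fintype_card, Fintype.card_coe]

end CycleOmega

section Final

lemma cycle_arith {n s ω τ m : ℕ} (hn : 4 ≤ n) (hm : s + m = n) (hω2 : 2 ≤ ω)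
    (hωs : ω ≤ s) (hωm : ω ≤ m) (hτ1 : 1 ≤ τ) (hτω : m ≤ τ * ω) :
    (n - n / 2 + 1) * ω ≤ (s + τ) * (n / 2) := by
  set a := n / 2 with ha
  set b := n - a with hb
  have h1 : a + b = n := by omega
  have h3 : b ≤ a + 1 := by omega
  have hωa : ω ≤ a := by omega
  rcases eq_or_lt_of_le hτ1 with hτ | hτ2
  · -- τ = 1
    have hωm' : ω = m := by
      have : m ≤ ω := by rw [← hτ, one_mul] at hτω; exact hτω
      omega
    subst hωm'
    have hma : ω ≤ a := hωa
    have hbs : b ≤ s := by omega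
    calc (b + 1) * ω ≤ (b + 1) * a := Nat.mul_le_mul_left _ hma
      _ ≤ (s + 1) * a := Nat.mul_le_mul_right _ (by omega)
      _ = (s + τ) * a := by rw [← hτ]
  · have hτ2' : 2 ≤ τ := hτ2
    by_cases hsb : b ≤ s + 1
    · calc (b + 1) * ω ≤ (b + 1) * a := Nat.mul_le_mul_left _ hωa
        _ ≤ (s + 2) * a := Nat.mul_le_mul_right _ (by omega)
        _ ≤ (s + τ) * a := Nat.mul_le_mul_right _ (by omega)
    · have hs : s + 2 ≤ b := by omega
      have hsa : s + 1 ≤ a := by omega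
      calc (b + 1) * ω ≤ (b + 1) * s := Nat.mul_le_mul_left _ hωs
        _ ≤ (a + 2) * s := Nat.mul_le_mul_right _ (by omega)
        _ ≤ (s + 2) * a := by nlinarith
        _ ≤ (s + τ) * a := Nat.mul_le_mul_right _ (by omega)

lemma cycle_cut_value_ge {n : ℕ} [NeZero n] (hn : 4 ≤ n) {X : Finset (Fin n)}
    (hcut : (cycleGraph n).IsVertexCut X) :
    ((n : ℝ) - (n / 2 : ℕ) + 1) / ((n / 2 : ℕ) : ℝ) ≤
      ((X.card : ℝ) + ((cycleGraph n).delVerts X).tauMax)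
        / (((cycleGraph n).delVerts X).omegaComp : ℝ) := by
  classical
  set H := (cycleGraph n).delVerts X with hH
  have hω2 : 2 ≤ H.omegaComp := hcut
  have hXne : X.Nonempty := by
    by_contra h
    rw [Finset.not_nonempty_iff_eq_empty] at h
    subst h
    have := omega_delVerts_empty _ (cycle_connected hn)
    rw [← hH] at this
    omega
  have hωs : H.omegaComp ≤ X.card := cycle_omega_le_card hn X hXne
  have hsn : X.card ≤ n := by
    have := Finset.card_le_univ X
    simpa using this
  have hmcard : Nat.card {v : Fin n // v ∉ X} = n - X.card := by
    rw [card_delVerts, Fintype.card_fin]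
  have hωm : H.omegaComp ≤ n - X.card := hmcard ▸ omega_le_card H
  have hτm : n - X.card ≤ H.tauMax * H.omegaComp := hmcard ▸ card_le_tau_mul_omega H
  have hWne : Nonempty {v : Fin n // v ∉ X} := by
    have hcc : Nonempty H.ConnectedComponent := by
      apply (Nat.card_pos_iff.mp ?_).1
      show 0 < H.omegaComp
      omega
    obtain ⟨c⟩ := hcc
    obtain ⟨w, _⟩ := c.exists_rep
    exact ⟨w⟩
  have hτ1 : 1 ≤ H.tauMax := one_le_tauMax H
  have harith : (n - n / 2 + 1) * H.omegaComp ≤ (X.card + H.tauMax) * (n / 2) :=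
    cycle_arith hn (by omega) hω2 hωs hωm hτ1 hτm
  have ha2 : 2 ≤ n / 2 := by omega
  have hω0 : (0 : ℝ) < (H.omegaComp : ℝ) := by
    have : 0 < H.omegaComp := by omega
    exact_mod_cast this
  have ha0 : (0 : ℝ) < ((n / 2 : ℕ) : ℝ) := by
    have : 0 < n / 2 := by omega
    exact_mod_cast this
  rw [div_le_div_iff₀ ha0 hω0]
  have hcast : ((n - n / 2 + 1 : ℕ) : ℝ) = (n : ℝ) - ((n / 2 : ℕ) : ℝ) + 1 := by
    have hle : n / 2 ≤ n := by omega
    push_cast [hle]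
    ring
  rw [← hcast]
  exact_mod_cast harith

end Final

lemma cycle_tenacity {n : ℕ} [NeZero n] (hn : 4 ≤ n) :
    (cycleGraph n).tenacity = ((n : ℝ) - ((n / 2 : ℕ) : ℝ) + 1) / ((n / 2 : ℕ) : ℝ) := by
  classical
  obtain ⟨I, hIcard, hIindep⟩ := cycle_indep hn
  have h2 : 2 ≤ I.card := by rw [hIcard]; omega
  obtain ⟨hcut, hval⟩ := indep_cut _ I hIindep h2
  apply le_antisymm
  · refine (tenacity_le _ hcut).trans_eq ?_
    rw [hval, hIcard, Fintype.card_fin]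
  · apply le_csInf
    · exact ⟨_, Iᶜ, hcut, rfl⟩
    · rintro t ⟨X, hX, rfl⟩
      exact cycle_cut_value_ge hn hX

lemma bound_form {n : ℕ} (hn : 4 ≤ n) :
    (if Odd n then ((n : ℝ) + 3) / ((n : ℝ) - 1) else ((n : ℝ) + 2) / n)
      = ((n : ℝ) - ((n / 2 : ℕ) : ℝ) + 1) / ((n / 2 : ℕ) : ℝ) := by
  rcases Nat.even_or_odd n with he | ho
  · rw [if_neg (by simpa using he)]
    obtain ⟨m, rfl⟩ := he
    have hm : (m + m) / 2 = m := by omega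
    rw [hm]
    have hm2 : 2 ≤ m := by omega
    have hm0 : (0 : ℝ) < (m : ℝ) := by exact_mod_cast (by omega : 0 < m)
    push_cast
    rw [div_eq_div_iff (by linarith) (by linarith)]
    ring
  · rw [if_pos ho]
    obtain ⟨m, rfl⟩ := ho
    have hm : (2 * m + 1) / 2 = m := by omega
    rw [hm]
    have hm2 : 2 ≤ m := by omega
    have hm0 : (0 : ℝ) < (m : ℝ) := by exact_mod_cast (by omega : 0 < m)
    push_cast
    rw [div_eq_div_iff (by linarith) (by linarith)]
    ring

lemma tenacity_le_bound {n : ℕ} (hn : 4 ≤ n) (G : SimpleGraph (Fin n)) (hG : G.Unicyclic) :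
    G.tenacity ≤ ((n : ℝ) - ((n / 2 : ℕ) : ℝ) + 1) / ((n / 2 : ℕ) : ℝ) := by
  classical
  have hc : Fintype.card (Fin n) = n := Fintype.card_fin n
  obtain ⟨I, hIcard, hIindep⟩ := exists_indep_half hG (by rw [hc]; exact hn)
  have h2 : 2 ≤ I.card := by rw [hIcard, hc]; omega
  obtain ⟨hcut, hval⟩ := indep_cut G I hIindep h2
  refine (tenacity_le G hcut).trans_eq ?_
  rw [hval, hIcard, hc]


theorem max_tenacity_unicyclic (n : ℕ) (hn : 4 ≤ n) :
    IsGreatest {t : ℝ | ∃ G : SimpleGraph (Fin n), G.Unicyclic ∧ t = G.tenacity}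
      (if Odd n then ((n : ℝ) + 3) / ((n : ℝ) - 1) else ((n : ℝ) + 2) / n) := by
  haveI : NeZero n := ⟨by omega⟩
  rw [bound_form hn]
  constructor
  · exact ⟨cycleGraph n, cycle_unicyclic hn, (cycle_tenacity hn).symm⟩
  · rintro t ⟨G, hG, rfl⟩
    exact tenacity_le_bound hn G hG
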